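/- Let p be a prime, r a positive integer, and G = ℤ_{p^r} of order q = p^r. Let d ∈ G, let H = ⟨d⟩ be the subgroup generated by d, let M be the maximal proper subgroup of H, q̄ = |H|/|M| = p, T_H a transversal of H in G with fixed t_H ∈ T_H, T_M a transversal of M in H, and W̄ the induced channel on the cosets {t_H + t_M + M : t_M ∈ T_M}. Let ε > 0. If Z_d(W) > 1 − ε, then Z_d(W̄) ≥ 1 − q³ε/q̄, where Z_d(W̄) = (1/q̄)·Σ_{t_M∈T_M} Σ_{y∈Y} √( W̄(y | t_H + t_M + M) · W̄(y | t_H + t_M + d + M) ) and t_H + t_M + d + M denotes the coset of M (within t_H + H) containing t_H + t_M + d. -/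

import Mathlib

open Finset

/-- Bhattacharyya distance between two input symbols. -/
noncomputable def Zpair {G Y : Type} [Fintype Y] (W : G → Y → ℝ) (x x' : G) : ℝ :=
  ∑ y : Y, Real.sqrt (W x y * W x' y)

/-- `Z_d(W) = (1/q)·Σ_{x∈G} Z(W_{x,x+d})`. -/
noncomputable def Zd {G Y : Type} [Fintype G] [Fintype Y] [Add G]
    (W : G → Y → ℝ) (d : G) : ℝ :=
  (1 / (Fintype.card G : ℝ)) * ∑ x : G, Zpair W x (x + d)

/-- The induced channel `W̄` on cosets of `M` inside the coset `t_H + H`: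
`W̄(y | t_H + t + M) = (1/|M|)·Σ_{m∈M} W(y | t_H + t + m)`. -/
noncomputable def inducedChannel {G Y : Type} [Fintype G] [AddCommGroup G] [DecidableEq G]
    (W : G → Y → ℝ) (tH : G) (M : AddSubgroup G) [DecidablePred (· ∈ M)] :
    G → Y → ℝ :=
  fun t y => (1 / (Nat.card M : ℝ)) *
    ∑ m ∈ Finset.univ.filter (fun m : G => m ∈ M), W (tH + t + m) y

lemma sum_sqrt_mul_le {ι : Type*} (s : Finset ι) (f g : ι → ℝ)
    (hf : ∀ i ∈ s, 0 ≤ f i) (hg : ∀ i ∈ s, 0 ≤ g i) :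
    ∑ i ∈ s, Real.sqrt (f i * g i) ≤ Real.sqrt ((∑ i ∈ s, f i) * (∑ i ∈ s, g i)) := by
  have h1 : ∑ i ∈ s, Real.sqrt (f i * g i) = ∑ i ∈ s, Real.sqrt (f i) * Real.sqrt (g i) :=
    Finset.sum_congr rfl fun i hi => Real.sqrt_mul (hf i hi) _
  rw [h1]
  refine Real.le_sqrt_of_sq_le ?_
  calc (∑ i ∈ s, Real.sqrt (f i) * Real.sqrt (g i))^2
      ≤ (∑ i ∈ s, Real.sqrt (f i)^2) * (∑ i ∈ s, Real.sqrt (g i)^2) :=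
        Finset.sum_mul_sq_le_sq_mul_sq s _ _
    _ = (∑ i ∈ s, f i) * (∑ i ∈ s, g i) := by
        rw [Finset.sum_congr rfl fun i hi => Real.sq_sqrt (hf i hi),
            Finset.sum_congr rfl fun i hi => Real.sq_sqrt (hg i hi)]

lemma Zpair_nonneg {G Y : Type} [Fintype Y] (W : G → Y → ℝ) (x x' : G) :
    0 ≤ Zpair W x x' :=
  Finset.sum_nonneg fun _ _ => Real.sqrt_nonneg _

lemma Zpair_le_one {G Y : Type} [Fintype Y] (W : G → Y → ℝ)
    (hW0 : ∀ x y, 0 ≤ W x y) (hW1 : ∀ x, ∑ y, W x y = 1) (x x' : G) :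
    Zpair W x x' ≤ 1 := by
  have := sum_sqrt_mul_le Finset.univ (W x) (W x')
    (fun y _ => hW0 x y) (fun y _ => hW0 x' y)
  rw [hW1 x, hW1 x', mul_one, Real.sqrt_one] at this
  exact this

set_option maxHeartbeats 1000000 in
/-- for `G = ℤ_{p^r}`, `H = ⟨d⟩`, `M` the maximal proper subgroup of `H`
(of index `q̄ = p` in `H`), `Z_d(W) > 1 − ε` implies `Z_d(W̄) ≥ 1 − q³ε/q̄` for the
induced channel `W̄`. -/
theorem Zd_inducedChannel_ge_Zpr
    (p r : ℕ) [Fact p.Prime] (hr : 0 < r) [NeZero (p ^ r)]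
    {Y : Type} [Fintype Y]
    (W : ZMod (p ^ r) → Y → ℝ) (hW0 : ∀ x y, 0 ≤ W x y) (hW1 : ∀ x, ∑ y, W x y = 1)
    (d : ZMod (p ^ r))
    (H : AddSubgroup (ZMod (p ^ r))) (hH : H = AddSubgroup.zmultiples d)
    (M : AddSubgroup (ZMod (p ^ r))) [DecidablePred (· ∈ M)]
    (hMH : M < H)
    (hMmax : ∀ K : AddSubgroup (ZMod (p ^ r)), M ≤ K → K ≤ H → K = M ∨ K = H)
    (hqbar : Nat.card H = p * Nat.card M)
    (TH : Finset (ZMod (p ^ r))) (hTH : ∀ g : ZMod (p ^ r), ∃! t, t ∈ TH ∧ g - t ∈ H)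
    (tH : ZMod (p ^ r)) (htH : tH ∈ TH)
    (TM : Finset (ZMod (p ^ r))) (hTMsub : (TM : Set (ZMod (p ^ r))) ⊆ (H : Set (ZMod (p ^ r))))
    (hTM : ∀ h ∈ H, ∃! t, t ∈ TM ∧ h - t ∈ M)
    (ρ : ZMod (p ^ r) → ZMod (p ^ r)) (hρ : ∀ h ∈ H, ρ h ∈ TM ∧ h - ρ h ∈ M)
    (ε : ℝ) (hε : 0 < ε)
    (hZ : Zd W d > 1 - ε) :
    (1 / (p : ℝ)) * ∑ t ∈ TM, Zpair (inducedChannel W tH M) t (ρ (t + d)) ≥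
      1 - ((p : ℝ) ^ r) ^ 3 * ε / (p : ℝ) := by
  classical
  have hp : p.Prime := Fact.out
  have hp1 : 1 < p := hp.one_lt
  have hpR : (0:ℝ) < p := by exact_mod_cast hp.pos
  have hqpos : 0 < p ^ r := pow_pos hp.pos r
  have hqR : (0:ℝ) < ((p ^ r : ℕ) : ℝ) := by exact_mod_cast hqpos
  have hcardG : Fintype.card (ZMod (p ^ r)) = p ^ r := ZMod.card (p ^ r)
  have hd : d ∈ H := by rw [hH]; exact AddSubgroup.mem_zmultiples d
  set Mfin : Finset (ZMod (p ^ r)) := Finset.univ.filter (fun m => m ∈ M) with hMfin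
  set Hfin : Finset (ZMod (p ^ r)) := Finset.univ.filter (fun m => m ∈ H) with hHfin
  have hMcard : Mfin.card = Nat.card M := by
    rw [Nat.card_eq_fintype_card, Fintype.card_subtype]
  have hHcard : Hfin.card = Nat.card H := by
    rw [Nat.card_eq_fintype_card, Fintype.card_subtype]
  have hm0 : 0 < Nat.card M := Nat.card_pos
  have hmR : (0:ℝ) < (Nat.card M : ℝ) := by exact_mod_cast hm0
  -- Step 1: pointwise bound for each t ∈ TM
  have step1 : ∀ t ∈ TM, (1 / (Nat.card M : ℝ)) *
      ∑ m ∈ Mfin, Zpair W (tH + t + m) (tH + t + m + d) ≤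
      Zpair (inducedChannel W tH M) t (ρ (t + d)) := by
    intro t ht
    have htH' : t ∈ H := hTMsub ht
    have htd : t + d ∈ H := H.add_mem htH' hd
    obtain ⟨hρTM, hρM⟩ := hρ (t + d) htd
    set δ : ZMod (p ^ r) := (t + d) - ρ (t + d) with hδ
    -- rewrite the second induced channel row
    have hrow : ∀ y, inducedChannel W tH M (ρ (t + d)) y =
        (1 / (Nat.card M : ℝ)) * ∑ m ∈ Mfin, W (tH + t + d + m) y := by
      intro y
      show (1 / (Nat.card M : ℝ)) * ∑ m ∈ Finset.univ.filter (fun m => m ∈ M),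
          W (tH + ρ (t + d) + m) y = _
      congr 1
      refine Finset.sum_nbij' (fun m => m - δ) (fun m => m + δ) ?_ ?_ ?_ ?_ ?_
      · intro a ha
        simp only [hMfin, Finset.mem_filter, Finset.mem_univ, true_and] at ha ⊢
        exact M.sub_mem ha hρM
      · intro a ha
        simp only [hMfin, Finset.mem_filter, Finset.mem_univ, true_and] at ha ⊢
        exact M.add_mem ha hρM
      · intro a _; ring
      · intro a _; ring
      · intro a _
        congr 1
        rw [hδ]; ring
    -- now main estimate
    rw [Zpair]
    have key : ∀ y : Y, (1 / (Nat.card M : ℝ)) *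
        ∑ m ∈ Mfin, Real.sqrt (W (tH + t + m) y * W (tH + t + d + m) y) ≤
        Real.sqrt (inducedChannel W tH M t y * inducedChannel W tH M (ρ (t + d)) y) := by
      intro y
      rw [hrow y]
      show _ ≤ Real.sqrt ((1 / (Nat.card M : ℝ)) * (∑ m ∈ Finset.univ.filter (fun m => m ∈ M), W (tH + t + m) y) * ((1 / (Nat.card M : ℝ)) * ∑ m ∈ Mfin, W (tH + t + d + m) y))
      have hre : (1 / (Nat.card M : ℝ)) * (∑ m ∈ Finset.univ.filter (fun m => m ∈ M), W (tH + t + m) y) * ((1 / (Nat.card M : ℝ)) * ∑ m ∈ Mfin, W (tH + t + d + m) y)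
          = ((1 / (Nat.card M : ℝ))^2) * ((∑ m ∈ Mfin, W (tH + t + m) y) * (∑ m ∈ Mfin, W (tH + t + d + m) y)) := by
        rw [hMfin]; ring
      rw [hre, Real.sqrt_mul (by positivity), Real.sqrt_sq_eq_abs, abs_of_nonneg (by positivity)]
      gcongr
      exact sum_sqrt_mul_le Mfin _ _ (fun m _ => hW0 _ y) (fun m _ => hW0 _ y)
    calc (1 / (Nat.card M : ℝ)) * ∑ m ∈ Mfin, Zpair W (tH + t + m) (tH + t + m + d)
        = (1 / (Nat.card M : ℝ)) * ∑ m ∈ Mfin, ∑ y : Y,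
            Real.sqrt (W (tH + t + m) y * W (tH + t + d + m) y) := by
          congr 1
          refine Finset.sum_congr rfl fun m _ => ?_
          rw [Zpair, show tH + t + m + d = tH + t + d + m from by ring]
      _ = ∑ y : Y, (1 / (Nat.card M : ℝ)) *
            ∑ m ∈ Mfin, Real.sqrt (W (tH + t + m) y * W (tH + t + d + m) y) := by
          rw [Finset.sum_comm, Finset.mul_sum]
      _ ≤ _ := Finset.sum_le_sum fun y _ => key y
  -- Step 2: regroup the double sum over TM × M as a sum over H
  have step2 : ∑ t ∈ TM, ∑ m ∈ Mfin, Zpair W (tH + t + m) (tH + t + m + d) =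
      ∑ h ∈ Hfin, Zpair W (tH + h) (tH + h + d) := by
    rw [← Finset.sum_product']
    refine Finset.sum_nbij' (fun a => a.1 + a.2) (fun h => (ρ h, h - ρ h)) ?_ ?_ ?_ ?_ ?_
    · rintro ⟨a, b⟩ hab
      simp only [Finset.mem_product, hMfin, hHfin, Finset.mem_filter, Finset.mem_univ,
        true_and] at hab ⊢
      exact H.add_mem (hTMsub hab.1) (hMH.le hab.2)
    · intro h hh
      simp only [hHfin, Finset.mem_filter, Finset.mem_univ, true_and] at hh
      obtain ⟨h1, h2⟩ := hρ h hh
      simp only [Finset.mem_product, hMfin, Finset.mem_filter, Finset.mem_univ, true_and]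
      exact ⟨h1, h2⟩
    · rintro ⟨a, b⟩ hab
      simp only [Finset.mem_product, hMfin, Finset.mem_filter, Finset.mem_univ,
        true_and] at hab
      have hH' : a + b ∈ H := H.add_mem (hTMsub hab.1) (hMH.le hab.2)
      obtain ⟨u, -, huniq⟩ := hTM (a + b) hH'
      have h1 : ρ (a + b) = u := huniq _ (hρ (a + b) hH')
      have h2 : a = u := huniq a ⟨hab.1, by simpa using hab.2⟩
      have h3 : ρ (a + b) = a := h1.trans h2.symm
      simp [h3]
    · intro h _
      simp
    · rintro ⟨a, b⟩ _
      show Zpair W (tH + a + b) (tH + a + b + d) = _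
      rw [show tH + a + b = tH + (a + b) from by ring]
  -- Step 3: the sum over H is at least |H| - q·ε
  have hsum_univ : (((p ^ r : ℕ) : ℝ)) * (1 - ε) < ∑ x : ZMod (p ^ r), Zpair W x (x + d) := by
    have := hZ
    rw [Zd, hcardG] at this
    calc ((p ^ r : ℕ) : ℝ) * (1 - ε) < ((p ^ r : ℕ) : ℝ) * ((1 / ((p ^ r : ℕ) : ℝ)) *
          ∑ x : ZMod (p ^ r), Zpair W x (x + d)) :=
        mul_lt_mul_of_pos_left this hqR
      _ = ∑ x : ZMod (p ^ r), Zpair W x (x + d) := by field_simp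
  have step3 : (Nat.card H : ℝ) - ((p ^ r : ℕ) : ℝ) * ε ≤
      ∑ h ∈ Hfin, Zpair W (tH + h) (tH + h + d) := by
    set S : Finset (ZMod (p ^ r)) := Hfin.image (fun h => tH + h) with hS
    have hinj : Set.InjOn (fun h => tH + h) Hfin := fun a _ b _ hab => by
      simpa using hab
    have hScard : S.card = Nat.card H := by
      rw [hS, Finset.card_image_of_injOn hinj, hHcard]
    have hSsum : ∑ x ∈ S, Zpair W x (x + d) =
        ∑ h ∈ Hfin, Zpair W (tH + h) (tH + h + d) := by
      rw [hS, Finset.sum_image (fun a ha b hb hab => hinj ha hb hab)]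
    have hsplit : ∑ x ∈ S, Zpair W x (x + d) + ∑ x ∈ Sᶜ, Zpair W x (x + d) =
        ∑ x : ZMod (p ^ r), Zpair W x (x + d) := Finset.sum_add_sum_compl S _
    have hcompl : ∑ x ∈ Sᶜ, Zpair W x (x + d) ≤ (Sᶜ.card : ℝ) := by
      calc ∑ x ∈ Sᶜ, Zpair W x (x + d) ≤ ∑ x ∈ Sᶜ, (1:ℝ) :=
          Finset.sum_le_sum fun x _ => Zpair_le_one W hW0 hW1 x (x + d)
        _ = (Sᶜ.card : ℝ) := by simp
    have hcomplcard : (Sᶜ.card : ℝ) = ((p ^ r : ℕ) : ℝ) - (Nat.card H : ℝ) := by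
      rw [Finset.card_compl, hScard, hcardG]
      have hle : Nat.card H ≤ p ^ r := by
        rw [← hHcard]
        exact (Finset.card_le_univ Hfin).trans (le_of_eq hcardG)
      push_cast [hle]
      ring
    rw [← hSsum]
    have := hsum_univ
    rw [← hsplit] at this
    nlinarith [hcompl, hcomplcard]
  -- Final arithmetic
  have hq1 : (1:ℝ) ≤ ((p ^ r : ℕ) : ℝ) := by exact_mod_cast hqpos
  have hm1 : (1:ℝ) ≤ (Nat.card M : ℝ) := by exact_mod_cast hm0
  have hqbarR : (Nat.card H : ℝ) = (p : ℝ) * (Nat.card M : ℝ) := by exact_mod_cast hqbar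
  have main : (1 / (p : ℝ)) * ∑ t ∈ TM, Zpair (inducedChannel W tH M) t (ρ (t + d)) ≥
      1 - ((p ^ r : ℕ) : ℝ) * ε / ((p : ℝ) * (Nat.card M : ℝ)) := by
    calc (1 / (p : ℝ)) * ∑ t ∈ TM, Zpair (inducedChannel W tH M) t (ρ (t + d))
        ≥ (1 / (p : ℝ)) * ∑ t ∈ TM, (1 / (Nat.card M : ℝ)) *
            ∑ m ∈ Mfin, Zpair W (tH + t + m) (tH + t + m + d) :=
          mul_le_mul_of_nonneg_left (Finset.sum_le_sum step1) (by positivity)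
      _ = (1 / (p : ℝ)) * ((1 / (Nat.card M : ℝ)) *
            ∑ h ∈ Hfin, Zpair W (tH + h) (tH + h + d)) := by
          rw [← Finset.mul_sum, step2]
      _ ≥ (1 / (p : ℝ)) * ((1 / (Nat.card M : ℝ)) *
            ((Nat.card H : ℝ) - ((p ^ r : ℕ) : ℝ) * ε)) :=
          mul_le_mul_of_nonneg_left
            (mul_le_mul_of_nonneg_left step3 (by positivity)) (by positivity)
      _ = 1 - ((p ^ r : ℕ) : ℝ) * ε / ((p : ℝ) * (Nat.card M : ℝ)) := by
          rw [hqbarR]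
          field_simp
  refine le_trans ?_ main
  have hqcast : ((p ^ r : ℕ) : ℝ) = (p : ℝ) ^ r := by push_cast; ring
  rw [hqcast, sub_le_sub_iff_left]
  rw [div_le_div_iff₀ (by positivity) hpR]
  rw [hqcast] at hq1
  have hQ2 : (1:ℝ) ≤ ((p:ℝ)^r)^2 := one_le_pow₀ hq1
  have h12 : (1:ℝ) ≤ ((p:ℝ)^r)^2 * (Nat.card M : ℝ) := by nlinarith
  have h1 : ((p:ℝ)^r) ≤ ((p:ℝ)^r)^3 * (Nat.card M : ℝ) := by nlinarith
  nlinarith [mul_pos hpR hε, h1]
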